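/- Let p_n be the orthonormal polynomials for the generalized Charlier weight w_k = a^k/(k!)² on ℕ, a > 0, with recurrence coefficients a_n, b_n. Then p_n(x+1) = p_n(x) + (n/a_n)p_{n-1}(x) + (a_n a_{n-1}/a)p_{n-2}(x). -/

import Mathlib

open Polynomial

/-- The generalized Charlier weight. -/
noncomputable def gcw (a : ℝ) (k : ℕ) : ℝ := a ^ k / ((k.factorial : ℝ)) ^ 2

lemma gcw_succ (a : ℝ) (ha : a ≠ 0) (k : ℕ) :
    gcw a (k + 1) * (((k : ℝ) + 1) ^ 2 / a) = gcw a k := by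
  have h1 : (((k + 1).factorial : ℝ)) = ((k : ℝ) + 1) * (k.factorial : ℝ) := by
    push_cast [Nat.factorial_succ]; ring
  have h2 : (k.factorial : ℝ) ≠ 0 := Nat.cast_ne_zero.2 k.factorial_ne_zero
  have h3 : ((k : ℝ) + 1) ≠ 0 := by positivity
  simp only [gcw, h1]
  field_simp
  ring

/-- Expansion of an arbitrary polynomial in the basis `p j`. -/
lemma gc_expand (p : ℕ → Polynomial ℝ)
    (hdeg : ∀ n, (p n).natDegree = n) (hlead : ∀ n, (p n).leadingCoeff ≠ 0) :
    ∀ N (q : Polynomial ℝ), q.natDegree ≤ N →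
      ∃ c : ℕ → ℝ, q = ∑ j ∈ Finset.range (N + 1), C (c j) * p j := by
  intro N
  induction N with
  | zero =>
    intro q hq
    refine ⟨fun _ => q.coeff 0 / (p 0).leadingCoeff, ?_⟩
    have h0 : p 0 = C ((p 0).leadingCoeff) := by
      conv_lhs => rw [Polynomial.eq_C_of_natDegree_le_zero (le_of_eq (hdeg 0))]
      rw [Polynomial.leadingCoeff, hdeg 0]
    rw [Finset.sum_range_one]
    show q = C (q.coeff 0 / (p 0).leadingCoeff) * p 0
    calc q = C (q.coeff 0) := Polynomial.eq_C_of_natDegree_le_zero hq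
      _ = C (q.coeff 0 / (p 0).leadingCoeff * (p 0).leadingCoeff) := by
          rw [div_mul_cancel₀ _ (hlead 0)]
      _ = C (q.coeff 0 / (p 0).leadingCoeff) * C ((p 0).leadingCoeff) := by rw [C_mul]
      _ = C (q.coeff 0 / (p 0).leadingCoeff) * p 0 := by rw [← h0]
  | succ N ih =>
    intro q hq
    set d : ℝ := q.coeff (N + 1) / (p (N + 1)).leadingCoeff with hd
    have hple : (p (N + 1)).coeff (N + 1) = (p (N + 1)).leadingCoeff := by
      rw [Polynomial.leadingCoeff, hdeg]
    have hq' : (q - C d * p (N + 1)).natDegree ≤ N := by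
      rw [Polynomial.natDegree_le_iff_coeff_eq_zero]
      intro M hM
      rcases eq_or_lt_of_le (Nat.succ_le_of_lt hM) with hM1 | hM1
      · simp only [Polynomial.coeff_sub, Polynomial.coeff_C_mul, ← hM1, hple]
        rw [hd, div_mul_cancel₀ _ (hlead (N + 1)), sub_self]
      · have h1 : q.coeff M = 0 :=
          Polynomial.coeff_eq_zero_of_natDegree_lt (lt_of_le_of_lt hq hM1)
        have h2 : (p (N + 1)).coeff M = 0 :=
          Polynomial.coeff_eq_zero_of_natDegree_lt (by rw [hdeg]; exact hM1)
        simp [h1, h2]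
    obtain ⟨c, hc⟩ := ih _ hq'
    refine ⟨fun j => if j = N + 1 then d else c j, ?_⟩
    rw [Finset.sum_range_succ]
    have hrw : ∑ j ∈ Finset.range (N + 1), C (if j = N + 1 then d else c j) * p j
        = ∑ j ∈ Finset.range (N + 1), C (c j) * p j := by
      refine Finset.sum_congr rfl fun j hj => ?_
      rw [if_neg (Nat.ne_of_lt (Finset.mem_range.mp hj))]
    rw [hrw, ← hc]
    have hb : (fun j => if j = N + 1 then d else c j) (N + 1) = d := by simp
    rw [hb]
    ring

lemma gc_summable (a : ℝ) (p : ℕ → Polynomial ℝ)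
    (hdeg : ∀ n, (p n).natDegree = n) (hlead : ∀ n, (p n).leadingCoeff ≠ 0)
    (hsum : ∀ n m : ℕ, Summable
      (fun k : ℕ => (p n).eval (k : ℝ) * (p m).eval (k : ℝ) * gcw a k))
    (n : ℕ) (q : Polynomial ℝ) :
    Summable (fun k : ℕ => (p n).eval (k : ℝ) * q.eval (k : ℝ) * gcw a k) := by
  obtain ⟨c, hc⟩ := gc_expand p hdeg hlead q.natDegree q le_rfl
  have heq : (fun k : ℕ => (p n).eval (k : ℝ) * q.eval (k : ℝ) * gcw a k)
      = fun k : ℕ => ∑ j ∈ Finset.range (q.natDegree + 1),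
          c j * ((p n).eval (k : ℝ) * (p j).eval (k : ℝ) * gcw a k) := by
    funext k
    conv_lhs => rw [hc]
    rw [Polynomial.eval_finset_sum, Finset.mul_sum, Finset.sum_mul]
    refine Finset.sum_congr rfl fun j _ => ?_
    simp only [eval_mul, eval_C]; ring
  rw [heq]
  exact summable_sum fun j _ => (hsum n j).mul_left (c j)

lemma gc_inner (a : ℝ) (p : ℕ → Polynomial ℝ)
    (hdeg : ∀ n, (p n).natDegree = n) (hlead : ∀ n, (p n).leadingCoeff ≠ 0)
    (hsum : ∀ n m : ℕ, Summable
      (fun k : ℕ => (p n).eval (k : ℝ) * (p m).eval (k : ℝ) * gcw a k))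
    (horth : ∀ n m : ℕ,
      (∑' k : ℕ, (p n).eval (k : ℝ) * (p m).eval (k : ℝ) * gcw a k)
        = if n = m then 1 else 0)
    (n : ℕ) (q : Polynomial ℝ) (hq : q.natDegree ≤ n) :
    ∑' k : ℕ, (p n).eval (k : ℝ) * q.eval (k : ℝ) * gcw a k
      = q.coeff n / (p n).leadingCoeff := by
  obtain ⟨c, hc⟩ := gc_expand p hdeg hlead n q hq
  have heq : (fun k : ℕ => (p n).eval (k : ℝ) * q.eval (k : ℝ) * gcw a k)
      = fun k : ℕ => ∑ j ∈ Finset.range (n + 1),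
          c j * ((p n).eval (k : ℝ) * (p j).eval (k : ℝ) * gcw a k) := by
    funext k
    conv_lhs => rw [hc]
    rw [Polynomial.eval_finset_sum, Finset.mul_sum, Finset.sum_mul]
    refine Finset.sum_congr rfl fun j _ => ?_
    simp only [eval_mul, eval_C]; ring
  rw [heq, Summable.tsum_finsetSum (fun j _ => (hsum n j).mul_left (c j))]
  have hterm : ∀ j ∈ Finset.range (n + 1),
      (∑' k : ℕ, c j * ((p n).eval (k : ℝ) * (p j).eval (k : ℝ) * gcw a k))
        = c j * (if n = j then 1 else 0) := by
    intro j _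
    rw [tsum_mul_left, horth n j]
  rw [Finset.sum_congr rfl hterm]
  have hsum_ite : ∑ j ∈ Finset.range (n + 1), c j * (if n = j then 1 else 0) = c n := by
    rw [Finset.sum_eq_single n]
    · simp
    · intro j _ hj
      rw [if_neg (fun h => hj h.symm), mul_zero]
    · intro h
      exact absurd (Finset.self_mem_range_succ n) h
  rw [hsum_ite]
  have hco : q.coeff n = c n * (p n).leadingCoeff := by
    rw [hc, Polynomial.finset_sum_coeff]
    rw [Finset.sum_eq_single n]
    · rw [Polynomial.coeff_C_mul, Polynomial.leadingCoeff, hdeg]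
    · intro j hj hjn
      have hj' : j < n := lt_of_le_of_ne (Nat.lt_succ_iff.mp (Finset.mem_range.mp hj)) hjn
      have : (p j).coeff n = 0 :=
        Polynomial.coeff_eq_zero_of_natDegree_lt (by rw [hdeg]; exact hj')
      rw [Polynomial.coeff_C_mul, this, mul_zero]
    · intro h
      exact absurd (Finset.self_mem_range_succ n) h
  rw [hco, mul_div_cancel_right₀ _ (hlead n)]

/-- The polynomial `a⁻¹ x² p j (x - 1)`. -/
noncomputable def qshift (a : ℝ) (p : ℕ → Polynomial ℝ) (j : ℕ) : Polynomial ℝ :=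
  C a⁻¹ * (X ^ 2 * (p j).comp (X - C 1))

lemma qshift_natDegree (a : ℝ) (ha : a ≠ 0) (p : ℕ → Polynomial ℝ)
    (hdeg : ∀ n, (p n).natDegree = n) (hlead : ∀ n, (p n).leadingCoeff ≠ 0) (j : ℕ) :
    (qshift a p j).natDegree = j + 2 ∧ (qshift a p j).leadingCoeff = a⁻¹ * (p j).leadingCoeff := by
  have hX1 : (X - C (1 : ℝ)).natDegree = 1 := natDegree_X_sub_C 1
  have hcomp_lead : ((p j).comp (X - C 1)).leadingCoeff = (p j).leadingCoeff := by
    rw [Polynomial.leadingCoeff_comp (by rw [hX1]; exact one_ne_zero)]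
    rw [(monic_X_sub_C (1 : ℝ)).leadingCoeff, one_pow, mul_one]
  have hcomp_ne : (p j).comp (X - C 1) ≠ 0 := fun h => by
    rw [h, leadingCoeff_zero] at hcomp_lead
    exact hlead j hcomp_lead.symm
  have hcomp_deg : ((p j).comp (X - C 1)).natDegree = j := by
    rw [Polynomial.natDegree_comp, hX1, hdeg, mul_one]
  have hXne : (X : Polynomial ℝ) ^ 2 ≠ 0 := pow_ne_zero 2 X_ne_zero
  constructor
  · rw [qshift, natDegree_C_mul (inv_ne_zero ha), natDegree_mul hXne hcomp_ne,
      natDegree_X_pow, hcomp_deg]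
    omega
  · rw [qshift, leadingCoeff_mul, leadingCoeff_mul, leadingCoeff_C,
      (monic_X_pow 2).leadingCoeff, one_mul, hcomp_lead]

lemma gc_shift (a : ℝ) (ha : a ≠ 0) (p : ℕ → Polynomial ℝ)
    (hdeg : ∀ n, (p n).natDegree = n) (hlead : ∀ n, (p n).leadingCoeff ≠ 0)
    (hsum : ∀ n m : ℕ, Summable
      (fun k : ℕ => (p n).eval (k : ℝ) * (p m).eval (k : ℝ) * gcw a k))
    (n j : ℕ) :
    (∑' k : ℕ, (p n).eval ((k : ℝ) + 1) * (p j).eval (k : ℝ) * gcw a k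
      = ∑' k : ℕ, (p n).eval (k : ℝ) * (qshift a p j).eval (k : ℝ) * gcw a k)
    ∧ Summable (fun k : ℕ => (p n).eval ((k : ℝ) + 1) * (p j).eval (k : ℝ) * gcw a k) := by
  set F : ℕ → ℝ := fun k => (p n).eval (k : ℝ) * (qshift a p j).eval (k : ℝ) * gcw a k with hF
  have hFs : Summable F := gc_summable a p hdeg hlead hsum n _
  have hpt : ∀ k : ℕ, F (k + 1) = (p n).eval ((k : ℝ) + 1) * (p j).eval (k : ℝ) * gcw a k := by
    intro k
    have he : (qshift a p j).eval ((k : ℝ) + 1)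
        = a⁻¹ * (((k : ℝ) + 1) ^ 2 * (p j).eval (k : ℝ)) := by
      simp [qshift, Polynomial.eval_comp]
    have hcast : ((k + 1 : ℕ) : ℝ) = (k : ℝ) + 1 := by push_cast; ring
    rw [hF]
    simp only [hcast, he]
    rw [← gcw_succ a ha k, div_eq_mul_inv]
    ring
  have hfun : (fun k : ℕ => (p n).eval ((k : ℝ) + 1) * (p j).eval (k : ℝ) * gcw a k)
      = fun k => F (k + 1) := funext fun k => (hpt k).symm
  have hF0 : F 0 = 0 := by
    simp [hF, qshift]
  constructor
  · rw [hfun]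
    have h := Summable.tsum_eq_zero_add hFs
    rw [hF0, zero_add] at h
    exact h.symm
  · rw [hfun]
    exact (summable_nat_add_iff 1).2 hFs

lemma gc_gamma (p : ℕ → Polynomial ℝ) (A b : ℕ → ℝ)
    (hdeg : ∀ n, (p n).natDegree = n)
    (hrec : ∀ n : ℕ, ∀ x : ℝ,
      x * (p n).eval x
        = A (n + 1) * (p (n + 1)).eval x + b n * (p n).eval x + A n * (p (n - 1)).eval x)
    (n : ℕ) :
    (p n).leadingCoeff = A (n + 1) * (p (n + 1)).leadingCoeff := by
  have hpoly : (X : Polynomial ℝ) * p n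
      = C (A (n + 1)) * p (n + 1) + C (b n) * p n + C (A n) * p (n - 1) :=
    Polynomial.funext fun x => by
      simp only [eval_add, eval_mul, eval_C, eval_X]
      exact hrec n x
  have h := congrArg (fun q => Polynomial.coeff q (n + 1)) hpoly
  simp only [Polynomial.coeff_X_mul, Polynomial.coeff_add, Polynomial.coeff_C_mul] at h
  rw [Polynomial.coeff_eq_zero_of_natDegree_lt
      (show (p n).natDegree < n + 1 by rw [hdeg]; omega),
    Polynomial.coeff_eq_zero_of_natDegree_lt
      (show (p (n - 1)).natDegree < n + 1 by rw [hdeg]; omega)] at h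
  simp only [mul_zero, add_zero] at h
  rw [Polynomial.leadingCoeff, Polynomial.leadingCoeff, hdeg, hdeg]
  exact h

/-- Structure relation for the orthonormal generalized Charlier polynomials
(weight `a^k/(k!)²`): `pₙ(x+1) = pₙ(x) + (n/aₙ)pₙ₋₁(x) + (aₙaₙ₋₁/a)pₙ₋₂(x)`. -/
theorem generalized_charlier_structure_relation (a : ℝ) (ha : 0 < a)
    (p : ℕ → Polynomial ℝ) (A b : ℕ → ℝ)
    (hdeg : ∀ n, (p n).natDegree = n)
    (hlead : ∀ n, 0 < (p n).leadingCoeff)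
    (hA0 : A 0 = 0)
    (hApos : ∀ n, 1 ≤ n → 0 < A n)
    (hsum : ∀ n m : ℕ, Summable
      (fun k : ℕ => (p n).eval (k : ℝ) * (p m).eval (k : ℝ)
        * (a ^ k / ((k.factorial : ℝ)) ^ 2)))
    (horth : ∀ n m : ℕ,
      (∑' k : ℕ, (p n).eval (k : ℝ) * (p m).eval (k : ℝ) * (a ^ k / ((k.factorial : ℝ)) ^ 2))
        = if n = m then 1 else 0)
    (hrec : ∀ n : ℕ, ∀ x : ℝ,
      x * (p n).eval x
        = A (n + 1) * (p (n + 1)).eval x + b n * (p n).eval x + A n * (p (n - 1)).eval x) :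
    ∀ n : ℕ, ∀ x : ℝ, (p n).eval (x + 1)
      = (p n).eval x + ((n : ℝ) / A n) * (p (n - 1)).eval x
        + (A n * A (n - 1) / a) * (p (n - 2)).eval x := by
  have ha0 : a ≠ 0 := ne_of_gt ha
  have hlead' : ∀ n, (p n).leadingCoeff ≠ 0 := fun n => ne_of_gt (hlead n)
  have hsum' : ∀ n m : ℕ, Summable
      (fun k : ℕ => (p n).eval (k : ℝ) * (p m).eval (k : ℝ) * gcw a k) := hsum
  have horth' : ∀ n m : ℕ,
      (∑' k : ℕ, (p n).eval (k : ℝ) * (p m).eval (k : ℝ) * gcw a k)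
        = if n = m then 1 else 0 := horth
  have hco : ∀ n, (p n).coeff n = (p n).leadingCoeff := fun n => by
    rw [Polynomial.leadingCoeff, hdeg]
  have hArel : ∀ n : ℕ, A (n + 1) = (p n).leadingCoeff / (p (n + 1)).leadingCoeff := by
    intro n
    rw [gc_gamma p A b hdeg hrec n, mul_div_cancel_right₀ _ (hlead' (n + 1))]
  intro n
  match n with
  | 0 =>
    intro x
    have h0 : p 0 = C ((p 0).coeff 0) :=
      Polynomial.eq_C_of_natDegree_le_zero (le_of_eq (hdeg 0))
    rw [h0]
    simp [hA0]
  | 1 =>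
    intro x
    have h1 : p 1 = C ((p 1).coeff 1) * X + C ((p 1).coeff 0) :=
      Polynomial.eq_X_add_C_of_natDegree_le_one (le_of_eq (hdeg 1))
    have h0 : p 0 = C ((p 0).leadingCoeff) := by
      conv_lhs => rw [Polynomial.eq_C_of_natDegree_le_zero (le_of_eq (hdeg 0))]
      rw [hco 0]
    have hA1 : A 1 = (p 0).leadingCoeff / (p 1).leadingCoeff := hArel 0
    have hc1 : (p 1).coeff 1 = (p 1).leadingCoeff := hco 1
    show (p 1).eval (x + 1) = (p 1).eval x + ((1 : ℕ) : ℝ) / A 1 * (p 0).eval x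
        + A 1 * A 0 / a * (p 0).eval x
    have e0 := hlead' 0
    have e1 := hlead' 1
    rw [hA0]
    conv_lhs => rw [h1]
    conv_rhs => rw [h1, h0]
    simp only [eval_add, eval_mul, eval_C, eval_X, Nat.cast_one, mul_zero, zero_mul,
      zero_div, add_zero, hA1, hc1]
    field_simp
    ring
  | (m + 2) =>
    set N := m + 2 with hNdef
    have hAN : A N = (p (m + 1)).leadingCoeff / (p N).leadingCoeff := hArel (m + 1)
    have hAN1 : A (m + 1) = (p m).leadingCoeff / (p (m + 1)).leadingCoeff := hArel m
    set D : Polynomial ℝ :=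
      (p N).comp (X + C 1) - p N - C ((N : ℝ) / A N) * p (m + 1)
        - C (A N * A (m + 1) / a) * p m with hDdef
    have hcomp_coeff : ∀ t, ((p N).comp (X + C 1)).coeff t
        = (Polynomial.hasseDeriv t (p N)).eval 1 := by
      intro t
      rw [← Polynomial.taylor_apply, Polynomial.taylor_coeff]
    have hcompdeg : ((p N).comp (X + C 1)).natDegree = N := by
      rw [Polynomial.natDegree_comp, Polynomial.natDegree_X_add_C, hdeg, mul_one]
    have hDeval : ∀ x : ℝ, D.eval x = (p N).eval (x + 1) - (p N).eval x
        - ((N : ℝ) / A N) * (p (m + 1)).eval x - (A N * A (m + 1) / a) * (p m).eval x := by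
      intro x
      simp [hDdef, Polynomial.eval_comp]
    -- degree bound on D
    have hDdeg : D.natDegree ≤ m := by
      rw [Polynomial.natDegree_le_iff_coeff_eq_zero]
      intro t ht
      simp only [hDdef, Polynomial.coeff_sub, Polynomial.coeff_C_mul]
      rcases Nat.lt_or_ge t (m + 2) with h1 | h1
      · -- t = m + 1
        have ht1 : t = m + 1 := by omega
        subst ht1
        rw [hcomp_coeff]
        have hH : (Polynomial.hasseDeriv (m + 1) (p N)).natDegree ≤ 1 := by
          have h := Polynomial.natDegree_hasseDeriv_le (p N) (m + 1)
          rw [hdeg] at h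
          omega
        have hHe : (Polynomial.hasseDeriv (m + 1) (p N)).eval 1
            = (Polynomial.hasseDeriv (m + 1) (p N)).coeff 1
              + (Polynomial.hasseDeriv (m + 1) (p N)).coeff 0 := by
          conv_lhs => rw [Polynomial.eq_X_add_C_of_natDegree_le_one hH]
          simp
        have hH1 : (Polynomial.hasseDeriv (m + 1) (p N)).coeff 1
            = ((m + 2 : ℕ) : ℝ) * (p N).coeff (m + 2) := by
          have hch : (1 + (m + 1)).choose (m + 1) = m + 2 := by
            rw [Nat.add_comm 1 (m + 1)]
            exact Nat.choose_succ_self_right (m + 1)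
          rw [Polynomial.hasseDeriv_coeff, hch, show 1 + (m + 1) = m + 2 by omega]
        have hH0 : (Polynomial.hasseDeriv (m + 1) (p N)).coeff 0
            = (p N).coeff (m + 1) := by
          rw [Polynomial.hasseDeriv_coeff]
          simp [Nat.choose_self]
        rw [hHe, hH1, hH0]
        have hpm : (p m).coeff (m + 1) = 0 :=
          Polynomial.coeff_eq_zero_of_natDegree_lt (by rw [hdeg]; omega)
        rw [hpm, mul_zero, sub_zero, hco (m + 1), hAN]
        have hcoN : (p N).coeff (m + 2) = (p N).leadingCoeff := hco N
        rw [hcoN]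
        have e1 := hlead' (m + 1)
        have e2 := hlead' N
        push_cast
        field_simp
        rw [hNdef]; push_cast; ring
      · rcases Nat.lt_or_ge (m + 2) t with h2 | h2
        · -- t > m + 2
          rw [Polynomial.coeff_eq_zero_of_natDegree_lt (by rw [hcompdeg]; omega),
            Polynomial.coeff_eq_zero_of_natDegree_lt (by rw [hdeg]; omega),
            Polynomial.coeff_eq_zero_of_natDegree_lt (show (p (m+1)).natDegree < t by rw [hdeg]; omega),
            Polynomial.coeff_eq_zero_of_natDegree_lt (show (p m).natDegree < t by rw [hdeg]; omega)]
          ring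
        · -- t = m + 2
          have ht2 : t = m + 2 := by omega
          subst ht2
          rw [hcomp_coeff]
          have hH : (Polynomial.hasseDeriv (m + 2) (p N)).natDegree ≤ 0 := by
            have h := Polynomial.natDegree_hasseDeriv_le (p N) (m + 2)
            rw [hdeg] at h
            omega
          have hHe : (Polynomial.hasseDeriv (m + 2) (p N)).eval 1
              = (Polynomial.hasseDeriv (m + 2) (p N)).coeff 0 := by
            conv_lhs => rw [Polynomial.eq_C_of_natDegree_le_zero hH]
            simp
          have hH0 : (Polynomial.hasseDeriv (m + 2) (p N)).coeff 0
              = (p N).coeff (m + 2) := by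
            rw [Polynomial.hasseDeriv_coeff]
            simp [Nat.choose_self]
          rw [hHe, hH0]
          rw [Polynomial.coeff_eq_zero_of_natDegree_lt (show (p (m+1)).natDegree < m + 2 by rw [hdeg]; omega),
            Polynomial.coeff_eq_zero_of_natDegree_lt (show (p m).natDegree < m + 2 by rw [hdeg]; omega)]
          ring
    -- orthogonality of D to p j for j ≤ m
    have hDorth : ∀ j, j ≤ m →
        ∑' k : ℕ, D.eval (k : ℝ) * (p j).eval (k : ℝ) * gcw a k = 0 := by
      intro j hj
      obtain ⟨hshift_eq, hshift_sum⟩ := gc_shift a ha0 p hdeg hlead' hsum' N j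
      have hkey : (fun k : ℕ => D.eval (k : ℝ) * (p j).eval (k : ℝ) * gcw a k)
          = fun k : ℕ => ((p N).eval ((k : ℝ) + 1) * (p j).eval (k : ℝ) * gcw a k)
              - ((p N).eval (k : ℝ) * (p j).eval (k : ℝ) * gcw a k)
              - ((N : ℝ) / A N) * ((p (m + 1)).eval (k : ℝ) * (p j).eval (k : ℝ) * gcw a k)
              - (A N * A (m + 1) / a) * ((p m).eval (k : ℝ) * (p j).eval (k : ℝ) * gcw a k) := by
        funext k
        rw [hDeval]
        ring
      rw [hkey]
      rw [Summable.tsum_sub (((hshift_sum.sub (hsum' N j)).sub ((hsum' (m+1) j).mul_left _)))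
          ((hsum' m j).mul_left _),
        Summable.tsum_sub (hshift_sum.sub (hsum' N j)) ((hsum' (m+1) j).mul_left _),
        Summable.tsum_sub hshift_sum (hsum' N j),
        tsum_mul_left, tsum_mul_left]
      rw [hshift_eq, horth' N j, horth' (m + 1) j, horth' m j]
      obtain ⟨hqdeg, hqlead⟩ := qshift_natDegree a ha0 p hdeg hlead' j
      have hqle : (qshift a p j).natDegree ≤ N := by omega
      rw [gc_inner a p hdeg hlead' hsum' horth' N _ hqle]
      have hNj : ¬ (N = j) := by omega
      have hm1j : ¬ (m + 1 = j) := by omega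
      rw [if_neg hNj, if_neg hm1j]
      rcases eq_or_lt_of_le hj with hjm | hjm
      · subst hjm
        rw [if_pos rfl]
        have hcq : (qshift a p j).coeff N = a⁻¹ * (p j).leadingCoeff := by
          rw [← hqlead, Polynomial.leadingCoeff, hqdeg]
        rw [hcq, hAN, hAN1]
        have e1 := hlead' (j + 1)
        have e2 := hlead' N
        field_simp
        ring
      · rw [if_neg (by omega)]
        have hcq : (qshift a p j).coeff N = 0 :=
          Polynomial.coeff_eq_zero_of_natDegree_lt (by omega)
        rw [hcq]
        simp
    -- expand D and conclude D = 0
    obtain ⟨c, hcD⟩ := gc_expand p hdeg hlead' m D hDdeg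
    have hczero : ∀ i ∈ Finset.range (m + 1), c i = 0 := by
      intro i hi
      have hi' : i ≤ m := Nat.lt_succ_iff.mp (Finset.mem_range.mp hi)
      have hval : ∑' k : ℕ, D.eval (k : ℝ) * (p i).eval (k : ℝ) * gcw a k = c i := by
        have heq : (fun k : ℕ => D.eval (k : ℝ) * (p i).eval (k : ℝ) * gcw a k)
            = fun k : ℕ => ∑ j ∈ Finset.range (m + 1),
                c j * ((p j).eval (k : ℝ) * (p i).eval (k : ℝ) * gcw a k) := by
          funext k
          conv_lhs => rw [hcD]
          rw [Polynomial.eval_finset_sum, Finset.sum_mul, Finset.sum_mul]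
          refine Finset.sum_congr rfl fun j _ => ?_
          simp only [eval_mul, eval_C]; ring
        rw [heq, Summable.tsum_finsetSum (fun j _ => (hsum' j i).mul_left (c j))]
        have hterm : ∀ j ∈ Finset.range (m + 1),
            (∑' k : ℕ, c j * ((p j).eval (k : ℝ) * (p i).eval (k : ℝ) * gcw a k))
              = c j * (if j = i then 1 else 0) := by
          intro j _
          rw [tsum_mul_left, horth' j i]
        rw [Finset.sum_congr rfl hterm, Finset.sum_eq_single i]
        · simp
        · intro j _ hji
          rw [if_neg hji, mul_zero]
        · intro h
          exact absurd hi h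
      rw [hDorth i hi'] at hval
      exact hval.symm
    have hD0 : D = 0 := by
      rw [hcD]
      apply Finset.sum_eq_zero
      intro j hjmem
      rw [hczero j hjmem]
      simp
    intro x
    have hx := hDeval x
    rw [hD0] at hx
    simp only [Polynomial.eval_zero] at hx
    show (p N).eval (x + 1) = (p N).eval x + ((N : ℕ) : ℝ) / A N * (p (m + 1)).eval x
        + A N * A (m + 1) / a * (p m).eval x
    linarith [hx]
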